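/- Let H : [0,1] → [0,1] be convex with H(0) ≤ 1, H(1) ≤ 1, and suppose H is twice differentiable on (0,1). Then the infimum over x ∈ (0,1) of x(1−x)H''(x) is at most 1/ln 2. Moreover, equality holds only if H(x) = (x ln x + (1−x) ln(1−x))/ln 2 + 1 for all x ∈ (0,1). -/

import Mathlib

open Real Set Filter Topology

noncomputable def phiE (x : ℝ) : ℝ := x * Real.log x + (1 - x) * Real.log (1 - x)

lemma phiE_continuous : Continuous phiE := by
  have h : phiE = fun x => -Real.negMulLog x - Real.negMulLog (1 - x) := by
    funext x; simp [phiE, Real.negMulLog]; ring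
  rw [h]; fun_prop

lemma phiE_zero : phiE 0 = 0 := by simp [phiE]
lemma phiE_one : phiE 1 = 0 := by simp [phiE]
lemma phiE_half : phiE (1/2) = -Real.log 2 := by
  have : (1:ℝ) - 1/2 = 1/2 := by norm_num
  rw [phiE, this]
  rw [show (1:ℝ)/2 = 2⁻¹ by norm_num, Real.log_inv]
  ring

lemma hasDerivAt_phiE {x : ℝ} (hx0 : 0 < x) (hx1 : x < 1) :
    HasDerivAt phiE (Real.log x - Real.log (1 - x)) x := by
  have h1 : HasDerivAt (fun y : ℝ => y * Real.log y) (Real.log x + 1) x :=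
    Real.hasDerivAt_mul_log hx0.ne'
  have h2 : HasDerivAt (fun y : ℝ => 1 - y) (-1) x := by
    simpa using (hasDerivAt_id' x).const_sub (1:ℝ)
  have h3 : HasDerivAt (fun y : ℝ => (1 - y) * Real.log (1 - y))
      ((Real.log (1 - x) + 1) * (-1)) x :=
    (Real.hasDerivAt_mul_log (by linarith : (1:ℝ) - x ≠ 0)).comp x h2
  have := h1.add h3
  refine HasDerivAt.congr_deriv this ?_
  ring

lemma G_convexOn (H : ℝ → ℝ) (c : ℝ)
    (hd1 : ∀ x ∈ Set.Ioo (0:ℝ) 1, DifferentiableAt ℝ H x)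
    (hd2 : ∀ x ∈ Set.Ioo (0:ℝ) 1, DifferentiableAt ℝ (deriv H) x)
    (hc : ∀ x ∈ Set.Ioo (0:ℝ) 1, c ≤ x * (1 - x) * deriv (deriv H) x) :
    ConvexOn ℝ (Set.Ioo (0:ℝ) 1) (fun y => H y - c * phiE y) := by
  set G : ℝ → ℝ := fun y => H y - c * phiE y with hG
  have hIoo : interior (Set.Ioo (0:ℝ) 1) = Set.Ioo (0:ℝ) 1 := isOpen_Ioo.interior_eq
  have hGd : ∀ x ∈ Set.Ioo (0:ℝ) 1,
      HasDerivAt G (deriv H x - c * (Real.log x - Real.log (1 - x))) x := by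
    intro x hx
    exact ((hd1 x hx).hasDerivAt).sub ((hasDerivAt_phiE hx.1 hx.2).const_mul c)
  set ψ : ℝ → ℝ := fun x => deriv H x - c * (Real.log x - Real.log (1 - x)) with hψ
  have hψd : ∀ x ∈ Set.Ioo (0:ℝ) 1,
      HasDerivAt ψ (deriv (deriv H) x - c * (1/x + 1/(1 - x))) x := by
    intro x hx
    have hx1 : (0:ℝ) < 1 - x := by linarith [hx.2]
    have d1 : HasDerivAt (deriv H) (deriv (deriv H) x) x := (hd2 x hx).hasDerivAt
    have d2 : HasDerivAt Real.log (1/x) x := by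
      simpa [one_div] using Real.hasDerivAt_log hx.1.ne'
    have d3 : HasDerivAt (fun y : ℝ => Real.log (1 - y)) (-(1/(1 - x))) x := by
      have hin : HasDerivAt (fun y : ℝ => 1 - y) (-1) x := by
        simpa using (hasDerivAt_id' x).const_sub (1:ℝ)
      have := (Real.hasDerivAt_log hx1.ne').comp x hin
      refine HasDerivAt.congr_deriv this ?_
      field_simp
    have := d1.sub ((d2.sub d3).const_mul c)
    refine HasDerivAt.congr_deriv this ?_
    ring
  have hev : ∀ x ∈ Set.Ioo (0:ℝ) 1, deriv G =ᶠ[𝓝 x] ψ := by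
    intro x hx
    filter_upwards [isOpen_Ioo.mem_nhds hx] with y hy
    exact (hGd y hy).deriv
  apply convexOn_of_deriv2_nonneg (convex_Ioo 0 1)
  · exact fun x hx => ((hGd x hx).continuousAt).continuousWithinAt
  · rw [hIoo]; exact fun x hx => ((hGd x hx).differentiableAt).differentiableWithinAt
  · rw [hIoo]; intro x hx
    exact (((hψd x hx).differentiableAt).congr_of_eventuallyEq (hev x hx)).differentiableWithinAt
  · rw [hIoo]; intro x hx
    have hx1 : (0:ℝ) < 1 - x := by linarith [hx.2]
    have e2 : deriv (deriv G) x = deriv (deriv H) x - c * (1/x + 1/(1 - x)) := by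
      rw [(hev x hx).deriv_eq]; exact (hψd x hx).deriv
    have h2 : deriv^[2] G x = deriv (deriv G) x := by
      simp [Function.iterate_succ_apply']
    rw [h2, e2]
    have hpos : 0 < x * (1 - x) := mul_pos hx.1 hx1
    have hcc : c * (1/x + 1/(1 - x)) = c / (x * (1 - x)) := by
      rw [div_add_div _ _ hx.1.ne' hx1.ne']
      rw [show (1 * (1 - x) + x * 1) = 1 by ring, mul_one_div]
    rw [hcc, sub_nonneg, div_le_iff₀ hpos]
    nlinarith [hc x hx]

lemma H_le_of_convexG (H : ℝ → ℝ) (c : ℝ)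
    (hbound : ∀ x ∈ Set.Icc (0:ℝ) 1, H x ∈ Set.Icc (0:ℝ) 1)
    (hGconv : ConvexOn ℝ (Set.Ioo (0:ℝ) 1) (fun y => H y - c * phiE y)) :
    ∀ x ∈ Set.Ioo (0:ℝ) 1, H x ≤ 1 + c * phiE x := by
  intro x hx
  obtain ⟨hx0, hx1⟩ := hx
  set G : ℝ → ℝ := fun y => H y - c * phiE y with hG
  set L : ℝ → ℝ := fun ε => (1 - ε - x) / (1 - 2*ε) with hL
  set F : ℝ → ℝ := fun ε => L ε * (1 - c * phiE ε) + (1 - L ε) * (1 - c * phiE (1 - ε)) with hF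
  have hm : 0 < min x (1 - x) := lt_min hx0 (by linarith)
  -- F tends to 1 as ε → 0⁺
  have hFcont : ContinuousAt F 0 := by
    have hLc : ContinuousAt L 0 := by
      apply ContinuousAt.div
      · fun_prop
      · fun_prop
      · norm_num
    have h1 : ContinuousAt phiE 0 := phiE_continuous.continuousAt
    have h2 : ContinuousAt (fun ε : ℝ => phiE (1 - ε)) 0 :=
      (phiE_continuous.comp (continuous_const.sub continuous_id)).continuousAt
    exact (hLc.mul ((continuousAt_const.sub (continuousAt_const.mul h1)))).add
      ((continuousAt_const.sub hLc).mul
        (continuousAt_const.sub (continuousAt_const.mul h2)))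
  have hF0 : F 0 = 1 := by
    simp [hF, hL, phiE_zero, phiE_one]
  have htend : Tendsto F (𝓝[>] (0:ℝ)) (𝓝 1) := by
    rw [← hF0]
    exact hFcont.continuousWithinAt.tendsto
  -- eventually G x ≤ F ε
  have hev : ∀ᶠ ε in 𝓝[>] (0:ℝ), G x ≤ F ε := by
    filter_upwards [Ioo_mem_nhdsGT_of_mem (Set.left_mem_Ico.2 hm)] with ε hε
    obtain ⟨hε0, hεm⟩ := hε
    have hεx : ε < x := lt_of_lt_of_le hεm (min_le_left _ _)
    have hεx' : ε < 1 - x := lt_of_lt_of_le hεm (min_le_right _ _)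
    have hden : 0 < 1 - 2*ε := by
      have : min x (1 - x) ≤ 1/2 := by
        rcases le_total x (1/2) with h | h
        · exact le_trans (min_le_left _ _) h
        · exact le_trans (min_le_right _ _) (by linarith)
      linarith
    have hLmem : 0 ≤ L ε ∧ L ε ≤ 1 := by
      constructor
      · apply div_nonneg (by linarith) hden.le
      · rw [div_le_one hden]; linarith
    have hcomb : L ε * ε + (1 - L ε) * (1 - ε) = x := by
      rw [hL]
      have hden' : 1 - 2*ε ≠ 0 := hden.ne'
      show (1 - ε - x) / (1 - 2*ε) * ε + (1 - (1 - ε - x) / (1 - 2*ε)) * (1 - ε) = x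
      have e : (1 - ε - x) / (1 - 2*ε) * (1 - 2*ε) = 1 - ε - x := div_mul_cancel₀ _ hden'
      linear_combination -e
    have hmem1 : ε ∈ Set.Ioo (0:ℝ) 1 := ⟨hε0, by linarith⟩
    have hmem2 : (1 - ε) ∈ Set.Ioo (0:ℝ) 1 := ⟨by linarith, by linarith⟩
    have hcv := hGconv.2 hmem1 hmem2 hLmem.1 (by linarith [hLmem.2] : (0:ℝ) ≤ 1 - L ε)
      (by ring : L ε + (1 - L ε) = 1)
    rw [smul_eq_mul, smul_eq_mul, smul_eq_mul, smul_eq_mul, hcomb] at hcv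
    have hb1 : G ε ≤ 1 - c * phiE ε := by
      have := (hbound ε ⟨hε0.le, by linarith⟩).2
      simp only [hG]; linarith
    have hb2 : G (1 - ε) ≤ 1 - c * phiE (1 - ε) := by
      have := (hbound (1 - ε) ⟨by linarith, by linarith⟩).2
      simp only [hG]; linarith
    calc G x ≤ L ε * G ε + (1 - L ε) * G (1 - ε) := hcv
      _ ≤ F ε := by
          apply add_le_add
          · exact mul_le_mul_of_nonneg_left hb1 hLmem.1
          · exact mul_le_mul_of_nonneg_left hb2 (by linarith [hLmem.2])
  have : G x ≤ 1 := ge_of_tendsto htend hev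
  simp only [hG] at this
  linarith

lemma c_le_inv_log_two (H : ℝ → ℝ) (c : ℝ)
    (hbound : ∀ x ∈ Set.Icc (0:ℝ) 1, H x ∈ Set.Icc (0:ℝ) 1)
    (hd1 : ∀ x ∈ Set.Ioo (0:ℝ) 1, DifferentiableAt ℝ H x)
    (hd2 : ∀ x ∈ Set.Ioo (0:ℝ) 1, DifferentiableAt ℝ (deriv H) x)
    (hc : ∀ x ∈ Set.Ioo (0:ℝ) 1, c ≤ x * (1 - x) * deriv (deriv H) x) :
    c ≤ 1 / Real.log 2 := by
  have hle := H_le_of_convexG H c hbound (G_convexOn H c hd1 hd2 hc)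
  have hhalf := hle (1/2) (by norm_num)
  rw [phiE_half] at hhalf
  have h0 : (0:ℝ) ≤ H (1/2) := (hbound (1/2) (by norm_num)).1
  have hlog : 0 < Real.log 2 := Real.log_pos one_lt_two
  rw [le_div_iff₀ hlog]
  nlinarith

lemma convex_forced_eq_one (G : ℝ → ℝ)
    (hGconv : ConvexOn ℝ (Set.Ioo (0:ℝ) 1) G)
    (hGle : ∀ y ∈ Set.Ioo (0:ℝ) 1, G y ≤ 1)
    (hGhalf : G (1/2) = 1) :
    ∀ x ∈ Set.Ioo (0:ℝ) 1, G x = 1 := by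
  intro x hx
  rcases lt_trichotomy x (1/2) with hlt | heq2 | hgt
  · have hne : (3 - 4*x) ≠ 0 := by intro h; nlinarith
    have hden : (0:ℝ) < 3 - 4*x := by linarith
    have hapos : (0:ℝ) < 1/(3-4*x) := by positivity
    have hbpos : (0:ℝ) ≤ (2-4*x)/(3-4*x) := div_nonneg (by linarith) hden.le
    have hab : 1/(3-4*x) + (2-4*x)/(3-4*x) = 1 := by field_simp; ring
    have hcomb : (1/(3-4*x)) * x + ((2-4*x)/(3-4*x)) * (3/4) = 1/2 := by
      field_simp; ring
    have hcv := hGconv.2 hx (by norm_num : (3/4 : ℝ) ∈ Set.Ioo (0:ℝ) 1)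
      hapos.le hbpos hab
    rw [smul_eq_mul, smul_eq_mul, smul_eq_mul, smul_eq_mul, hcomb, hGhalf] at hcv
    have h34 : G (3/4) ≤ 1 := hGle (3/4) (by norm_num)
    have hb1 : ((2-4*x)/(3-4*x)) * G (3/4) ≤ ((2-4*x)/(3-4*x)) * 1 :=
      mul_le_mul_of_nonneg_left h34 hbpos
    have ha1 : (1/(3-4*x)) * 1 ≤ (1/(3-4*x)) * G x := by linarith
    have h5 : 1 ≤ G x := (mul_le_mul_iff_right₀ hapos).mp ha1
    linarith [hGle x hx]
  · rw [heq2]; exact hGhalf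
  · have hne : (4*x - 1) ≠ 0 := by intro h; nlinarith
    have hden : (0:ℝ) < 4*x - 1 := by linarith
    have hapos : (0:ℝ) ≤ (4*x-2)/(4*x-1) := div_nonneg (by linarith) hden.le
    have hbpos : (0:ℝ) < 1/(4*x-1) := by positivity
    have hab : (4*x-2)/(4*x-1) + 1/(4*x-1) = 1 := by field_simp; ring
    have hcomb : ((4*x-2)/(4*x-1)) * (1/4) + (1/(4*x-1)) * x = 1/2 := by
      field_simp; ring
    have hcv := hGconv.2 (by norm_num : (1/4 : ℝ) ∈ Set.Ioo (0:ℝ) 1) hx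
      hapos hbpos.le hab
    rw [smul_eq_mul, smul_eq_mul, smul_eq_mul, smul_eq_mul, hcomb, hGhalf] at hcv
    have h14 : G (1/4) ≤ 1 := hGle (1/4) (by norm_num)
    have ha1 : ((4*x-2)/(4*x-1)) * G (1/4) ≤ ((4*x-2)/(4*x-1)) * 1 :=
      mul_le_mul_of_nonneg_left h14 hapos
    have hb1 : (1/(4*x-1)) * 1 ≤ (1/(4*x-1)) * G x := by linarith
    have h5 : 1 ≤ G x := (mul_le_mul_iff_right₀ hbpos).mp hb1
    linarith [hGle x hx]

theorem log_rule_maximizes_beta_operator (H : ℝ → ℝ)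
    (hconv : ConvexOn ℝ (Set.Icc (0:ℝ) 1) H)
    (hbound : ∀ x ∈ Set.Icc (0:ℝ) 1, H x ∈ Set.Icc (0:ℝ) 1)
    (h0 : H 0 ≤ 1) (h1 : H 1 ≤ 1)
    (hd1 : ∀ x ∈ Set.Ioo (0:ℝ) 1, DifferentiableAt ℝ H x)
    (hd2 : ∀ x ∈ Set.Ioo (0:ℝ) 1, DifferentiableAt ℝ (deriv H) x) :
    (⨅ x : Set.Ioo (0:ℝ) 1, (x:ℝ) * (1 - (x:ℝ)) * deriv (deriv H) x) ≤ 1 / Real.log 2 ∧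
    ((⨅ x : Set.Ioo (0:ℝ) 1, (x:ℝ) * (1 - (x:ℝ)) * deriv (deriv H) x) = 1 / Real.log 2 →
      ∀ x ∈ Set.Ioo (0:ℝ) 1,
        H x = (x * Real.log x + (1 - x) * Real.log (1 - x)) / Real.log 2 + 1) := by
  have hlog : (0:ℝ) < Real.log 2 := Real.log_pos one_lt_two
  constructor
  · by_cases hbb : BddBelow (Set.range
        (fun x : Set.Ioo (0:ℝ) 1 => (x:ℝ) * (1 - (x:ℝ)) * deriv (deriv H) x))
    · exact c_le_inv_log_two H _ hbound hd1 hd2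
        (fun x hx => ciInf_le hbb (⟨x, hx⟩ : Set.Ioo (0:ℝ) 1))
    · rw [Real.iInf_of_not_bddBelow hbb]
      positivity
  · intro heq x hx
    have hbb : BddBelow (Set.range
        (fun x : Set.Ioo (0:ℝ) 1 => (x:ℝ) * (1 - (x:ℝ)) * deriv (deriv H) x)) := by
      by_contra hbb
      rw [Real.iInf_of_not_bddBelow hbb] at heq
      have h2 : (0:ℝ) < 1 / Real.log 2 := by positivity
      rw [← heq] at h2
      exact lt_irrefl _ h2
    have hc : ∀ y ∈ Set.Ioo (0:ℝ) 1,
        1 / Real.log 2 ≤ y * (1 - y) * deriv (deriv H) y := by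
      intro y hy
      have := ciInf_le hbb (⟨y, hy⟩ : Set.Ioo (0:ℝ) 1)
      rw [heq] at this
      exact this
    have hGconv := G_convexOn H (1 / Real.log 2) hd1 hd2 hc
    have hle := H_le_of_convexG H (1 / Real.log 2) hbound hGconv
    have hGle : ∀ y ∈ Set.Ioo (0:ℝ) 1, H y - (1 / Real.log 2) * phiE y ≤ 1 := by
      intro y hy
      linarith [hle y hy]
    have hGhalf : H (1/2) - (1 / Real.log 2) * phiE (1/2) = 1 := by
      have hh1 := hle (1/2) (by norm_num)
      rw [phiE_half] at hh1
      have hh0 : (0:ℝ) ≤ H (1/2) := (hbound (1/2) (by norm_num)).1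
      have hinv : (1 / Real.log 2) * Real.log 2 = 1 := by field_simp
      have hH : H (1/2) = 0 := by nlinarith
      rw [hH, phiE_half]
      nlinarith
    have hGx := convex_forced_eq_one (fun y => H y - (1 / Real.log 2) * phiE y)
      hGconv hGle hGhalf x hx
    beta_reduce at hGx
    have hphi : (1 / Real.log 2) * phiE x = phiE x / Real.log 2 := by ring
    rw [show (x * Real.log x + (1 - x) * Real.log (1 - x)) = phiE x from rfl]
    rw [← hphi]
    linarith
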